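/- Let ζ = e^{2πi/96} ∈ ℂ (so q = ζ²⁴ = i = e^{2πi/4}). Let ε_m = −1 if m ≡ ±1 (mod 12), ε_m = +1 if m ≡ ±5 (mod 12), ε_m = 0 otherwise. For n ≥ 1 set J_n = −(ζ^{−36n²+24}/(ζ^{12n} − ζ^{−12n})) · Σ_{r=0}^{6n} ε_{6n−r} ζ^{r²−1} (the colored Jones polynomial of the right-handed trefoil T(2,3) evaluated with q^{1/24} = ζ) and [n] = (ζ^{12n} − ζ^{−12n})/(ζ^{12} − ζ^{−12}). Then (−i(ζ^{12} − ζ^{−12})/√8) · (Σ_{n=1}^{3} [n]² ζ^{−6(n²−1)} J_n²) / (Σ_{n=1}^{3} [n]² ζ^{−6(n²−1)}) = 1/2. (This is the SU(2) Chern–Simons partition function Z_CS[S³_{−1}(T(2,3) # T(2,3))] at level k = 4.) -/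

import Mathlib

open scoped Classical in
/-- `ε_m = −1` if `m ≡ ±1 (mod 12)`, `ε_m = +1` if `m ≡ ±5 (mod 12)`, `ε_m = 0` otherwise. -/
noncomputable def trefoilEps (m : ℤ) : ℤ :=
  if (m ≡ 1 [ZMOD 12] ∨ m ≡ -1 [ZMOD 12]) then -1
  else if (m ≡ 5 [ZMOD 12] ∨ m ≡ -5 [ZMOD 12]) then 1
  else 0

/-- `ζ = e^{2πi/96}`, so that `q = ζ²⁴ = i = e^{2πi/4}` (level `k = 4`). -/
noncomputable def ζ96 : ℂ := Complex.exp (2 * Real.pi * Complex.I / 96)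

/-- The colored Jones polynomial of the right-handed trefoil `T(2,3)` evaluated with
`q^{1/24} = ζ = e^{2πi/96}`:
`J_n = −(ζ^{−36n²+24}/(ζ^{12n} − ζ^{−12n})) Σ_{r=0}^{6n} ε_{6n−r} ζ^{r²−1}`. -/
noncomputable def J96 (n : ℕ) : ℂ :=
  -(ζ96 ^ (-36*(n:ℤ)^2 + 24) / (ζ96 ^ (12*(n:ℤ)) - ζ96 ^ (-(12*(n:ℤ))))) *
    ∑ r ∈ Finset.range (6*n + 1), (trefoilEps (6*(n:ℤ) - (r:ℤ)) : ℂ) * ζ96 ^ ((r:ℤ)^2 - 1)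

/-- The quantum integer `[n] = (ζ^{12n} − ζ^{−12n})/(ζ^{12} − ζ^{−12})`. -/
noncomputable def qint96 (n : ℕ) : ℂ :=
  (ζ96 ^ (12*(n:ℤ)) - ζ96 ^ (-(12*(n:ℤ)))) / (ζ96 ^ (12:ℤ) - ζ96 ^ (-12:ℤ))

lemma eps1 : trefoilEps 1 = -1 := by unfold trefoilEps; rw [if_pos (by decide)]
lemma eps5 : trefoilEps 5 = 1 := by unfold trefoilEps; rw [if_neg (by decide), if_pos (by decide)]
lemma eps7 : trefoilEps 7 = 1 := by unfold trefoilEps; rw [if_neg (by decide), if_pos (by decide)]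
lemma eps11 : trefoilEps 11 = -1 := by unfold trefoilEps; rw [if_pos (by decide)]
lemma eps13 : trefoilEps 13 = -1 := by unfold trefoilEps; rw [if_pos (by decide)]
lemma eps17 : trefoilEps 17 = 1 := by unfold trefoilEps; rw [if_neg (by decide), if_pos (by decide)]
lemma eps0 : trefoilEps 0 = 0 := by unfold trefoilEps; rw [if_neg (by decide), if_neg (by decide)]
lemma eps2 : trefoilEps 2 = 0 := by unfold trefoilEps; rw [if_neg (by decide), if_neg (by decide)]
lemma eps3 : trefoilEps 3 = 0 := by unfold trefoilEps; rw [if_neg (by decide), if_neg (by decide)]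
lemma eps4 : trefoilEps 4 = 0 := by unfold trefoilEps; rw [if_neg (by decide), if_neg (by decide)]
lemma eps6 : trefoilEps 6 = 0 := by unfold trefoilEps; rw [if_neg (by decide), if_neg (by decide)]
lemma eps8 : trefoilEps 8 = 0 := by unfold trefoilEps; rw [if_neg (by decide), if_neg (by decide)]
lemma eps9 : trefoilEps 9 = 0 := by unfold trefoilEps; rw [if_neg (by decide), if_neg (by decide)]
lemma eps10 : trefoilEps 10 = 0 := by unfold trefoilEps; rw [if_neg (by decide), if_neg (by decide)]
lemma eps12 : trefoilEps 12 = 0 := by unfold trefoilEps; rw [if_neg (by decide), if_neg (by decide)]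
lemma eps14 : trefoilEps 14 = 0 := by unfold trefoilEps; rw [if_neg (by decide), if_neg (by decide)]
lemma eps15 : trefoilEps 15 = 0 := by unfold trefoilEps; rw [if_neg (by decide), if_neg (by decide)]
lemma eps16 : trefoilEps 16 = 0 := by unfold trefoilEps; rw [if_neg (by decide), if_neg (by decide)]
lemma eps18 : trefoilEps 18 = 0 := by unfold trefoilEps; rw [if_neg (by decide), if_neg (by decide)]

lemma hz0 : ζ96 ≠ 0 := Complex.exp_ne_zero _

lemma h12 : ζ96 ^ (12:ℤ) = ((Real.sqrt 2 : ℂ) + (Real.sqrt 2:ℂ) * Complex.I)/2 := by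
  have h : ζ96 ^ (12:ℤ) = Complex.exp ((Real.pi/4 : ℝ) * Complex.I) := by
    unfold ζ96
    rw [← Complex.exp_int_mul]
    congr 1; push_cast; ring
  rw [h, Complex.exp_mul_I, ← Complex.ofReal_cos, ← Complex.ofReal_sin,
    Real.cos_pi_div_four, Real.sin_pi_div_four]
  push_cast; ring

lemma hc : ((Real.sqrt 2 : ℝ) : ℂ)^2 = 2 := by
  norm_cast
  rw [Real.sq_sqrt] <;> norm_num

lemma h24 : ζ96 ^ (24:ℤ) = Complex.I := by
  rw [show (24:ℤ) = 12 + 12 by norm_num, zpow_add₀ hz0, h12]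
  linear_combination ((1+Complex.I)^2/4) * hc + (1/2) * Complex.I_sq

lemma h48 : ζ96 ^ (48:ℤ) = -1 := by
  rw [show (48:ℤ) = 24 + 24 by norm_num, zpow_add₀ hz0, h24, Complex.I_mul_I]

lemma h96 : ζ96 ^ (96:ℤ) = 1 := by
  rw [show (96:ℤ) = 48 + 48 by norm_num, zpow_add₀ hz0, h48]; ring

lemma hm24 : ζ96 ^ (-24:ℤ) = -Complex.I := by
  rw [show (-24:ℤ) = -(24:ℤ) by norm_num, zpow_neg, h24, Complex.inv_I]

lemma hm12 : ζ96 ^ (-12:ℤ) = ((Real.sqrt 2 : ℂ) - (Real.sqrt 2:ℂ) * Complex.I)/2 := by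
  rw [show (-12:ℤ) = 12 + -24 by norm_num, zpow_add₀ hz0, h12, hm24]
  linear_combination (-(Real.sqrt 2:ℂ)/2) * Complex.I_sq

lemma hm48 : ζ96 ^ (-48:ℤ) = -1 := by
  rw [show (-48:ℤ) = -(48:ℤ) by norm_num, zpow_neg, h48]; norm_num

lemma hm96 : ζ96 ^ (-96:ℤ) = 1 := by
  rw [show (-96:ℤ) = -(96:ℤ) by norm_num, zpow_neg, h96]; norm_num

lemma h36 : ζ96 ^ (36:ℤ) = (-(Real.sqrt 2 : ℂ) + (Real.sqrt 2:ℂ) * Complex.I)/2 := by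
  rw [show (36:ℤ) = 48 + -12 by norm_num, zpow_add₀ hz0, h48, hm12]; ring

lemma hm36 : ζ96 ^ (-36:ℤ) = (-(Real.sqrt 2 : ℂ) - (Real.sqrt 2:ℂ) * Complex.I)/2 := by
  rw [show (-36:ℤ) = -48 + 12 by norm_num, zpow_add₀ hz0, hm48, h12]; ring

lemma h72 : ζ96 ^ (72:ℤ) = -Complex.I := by
  rw [show (72:ℤ) = 48 + 24 by norm_num, zpow_add₀ hz0, h48, h24]; ring

lemma h120 : ζ96 ^ (120:ℤ) = Complex.I := by
  rw [show (120:ℤ) = 24 + 96 by norm_num, zpow_add₀ hz0, h24, h96]; ring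

lemma h168 : ζ96 ^ (168:ℤ) = -Complex.I := by
  rw [show (168:ℤ) = 72 + 96 by norm_num, zpow_add₀ hz0, h72, h96]; ring

lemma h288 : ζ96 ^ (288:ℤ) = 1 := by
  rw [show (288:ℤ) = 96 + 96 + 96 by norm_num, zpow_add₀ hz0, zpow_add₀ hz0, h96]; ring

lemma hm120 : ζ96 ^ (-120:ℤ) = -Complex.I := by
  rw [show (-120:ℤ) = -24 + -96 by norm_num, zpow_add₀ hz0, hm24, hm96]; ring

lemma hm300 : ζ96 ^ (-300:ℤ) = ((Real.sqrt 2 : ℂ) - (Real.sqrt 2:ℂ) * Complex.I)/2 := by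
  rw [show (-300:ℤ) = -12 + -96 + -96 + -96 by norm_num, zpow_add₀ hz0, zpow_add₀ hz0,
    zpow_add₀ hz0, hm12, hm96]; ring

lemma hdiff : ζ96 ^ (12:ℤ) - ζ96 ^ (-12:ℤ) = (Real.sqrt 2 : ℂ) * Complex.I := by
  rw [h12, hm12]; ring

lemma hsne : ((Real.sqrt 2 : ℝ) : ℂ) ≠ 0 := by
  intro h; have h2 := hc; rw [h] at h2; norm_num at h2


lemma hIne : (Real.sqrt 2 : ℂ) * Complex.I ≠ 0 := mul_ne_zero hsne Complex.I_ne_zero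

lemma hJ1 : J96 1 = 1 := by
  rw [J96]
  norm_num [Finset.sum_range_succ, eps0, eps1, eps2, eps3, eps4, eps5, eps6, h24]
  simp only [← zpow_natCast, Nat.cast_ofNat, h24]
  rw [← zpow_neg, hdiff, hm12]
  field_simp
  linear_combination (-1:ℂ) * Complex.I_sq

lemma hdiff36 : ζ96 ^ (36:ℤ) - ζ96 ^ (-36:ℤ) = (Real.sqrt 2 : ℂ) * Complex.I := by
  rw [h36, hm36]; ring

lemma hJ2 : J96 2 = -1 := by
  rw [J96]
  norm_num [Finset.sum_range_succ, eps0, eps1, eps2, eps3, eps4, eps5, eps6, eps7, eps8,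
    eps9, eps10, eps11, eps12, h24, h48, h120, hm120]
  simp only [← zpow_natCast, Nat.cast_ofNat, h24, h48, h120, hm120]
  field_simp
  ring
  rw [Complex.I_sq]; norm_num

lemma hJ3 : J96 3 = 1 := by
  rw [J96]
  norm_num [Finset.sum_range_succ, eps0, eps1, eps2, eps3, eps4, eps5, eps6, eps7, eps8,
    eps9, eps10, eps11, eps12, eps13, eps14, eps15, eps16, eps17, eps18,
    h24, h48, h120, h168, h288]
  simp only [← zpow_natCast, Nat.cast_ofNat, h24, h48, h120, h168, h288]
  rw [show ((ζ96 ^ (300:ℤ))⁻¹ : ℂ) = ζ96 ^ (-300:ℤ) from (zpow_neg ζ96 300).symm,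
    show ((ζ96 ^ (36:ℤ))⁻¹ : ℂ) = ζ96 ^ (-36:ℤ) from (zpow_neg ζ96 36).symm,
    hm300, hdiff36]
  field_simp
  linear_combination (-1:ℂ) * Complex.I_sq

lemma hq1 : qint96 1 = 1 := by
  rw [qint96, show (12*((1:ℕ):ℤ)) = (12:ℤ) by norm_num, hdiff]
  exact div_self hIne

lemma hq2 : qint96 2 = (Real.sqrt 2 : ℂ) := by
  rw [qint96, show (12*((2:ℕ):ℤ)) = (24:ℤ) by norm_num, h24, hm24, hdiff]
  rw [div_eq_iff hIne]
  linear_combination (-Complex.I) * hc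

lemma hq3 : qint96 3 = 1 := by
  rw [qint96, show (12*((3:ℕ):ℤ)) = (36:ℤ) by norm_num, hdiff36, hdiff]
  exact div_self hIne

lemma hden : (∑ n ∈ Finset.Icc 1 3, (qint96 n)^2 * ζ96 ^ (-6*((n:ℤ)^2 - 1)))
    = 2 * ζ96 ^ (-18:ℤ) := by
  rw [show (Finset.Icc 1 3 : Finset ℕ) = {1,2,3} from rfl]
  rw [Finset.sum_insert (by decide), Finset.sum_insert (by decide), Finset.sum_singleton]
  rw [hq1, hq2, hq3,
    show (-6*(((1:ℕ):ℤ)^2 - 1)) = (0:ℤ) by norm_num,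
    show (-6*(((2:ℕ):ℤ)^2 - 1)) = (-18:ℤ) by norm_num,
    show (-6*(((3:ℕ):ℤ)^2 - 1)) = (-48:ℤ) by norm_num, hm48, zpow_zero]
  linear_combination (ζ96 ^ (-18:ℤ)) * hc

/-- The SU(2) Chern–Simons partition function of `S³_{−1}(T(2,3) # T(2,3))` at level
`k = 4` equals `1/2`:
`(−i(ζ¹² − ζ⁻¹²)/√8) · (Σ_{n=1}^{3} [n]² ζ^{−6(n²−1)} J_n²)/(Σ_{n=1}^{3} [n]² ζ^{−6(n²−1)}) = 1/2`. -/
theorem Z_CS_trefoil_connected_sum_level_four :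
    (-Complex.I * (ζ96 ^ (12:ℤ) - ζ96 ^ (-12:ℤ)) / (Real.sqrt 8 : ℂ)) *
      ((∑ n ∈ Finset.Icc 1 3, (qint96 n)^2 * ζ96 ^ (-6*((n:ℤ)^2 - 1)) * (J96 n)^2) /
        (∑ n ∈ Finset.Icc 1 3, (qint96 n)^2 * ζ96 ^ (-6*((n:ℤ)^2 - 1))))
      = 1 / 2 := by
  have hnum : (∑ n ∈ Finset.Icc 1 3, (qint96 n)^2 * ζ96 ^ (-6*((n:ℤ)^2 - 1)) * (J96 n)^2)
      = ∑ n ∈ Finset.Icc 1 3, (qint96 n)^2 * ζ96 ^ (-6*((n:ℤ)^2 - 1)) := by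
    refine Finset.sum_congr rfl fun n hn => ?_
    fin_cases hn <;> norm_num [hJ1, hJ2, hJ3]
  have hdne : (∑ n ∈ Finset.Icc 1 3, (qint96 n)^2 * ζ96 ^ (-6*((n:ℤ)^2 - 1))) ≠ 0 := by
    rw [hden]
    exact mul_ne_zero two_ne_zero (zpow_ne_zero _ hz0)
  rw [hnum, div_self hdne, mul_one, hdiff]
  have h8 : (Real.sqrt 8 : ℝ) = 2 * Real.sqrt 2 := by
    rw [show (8:ℝ) = 2^2*2 by norm_num, Real.sqrt_mul (by positivity), Real.sqrt_sq (by norm_num)]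
  rw [h8]
  push_cast
  rw [div_eq_div_iff (by exact mul_ne_zero two_ne_zero hsne) (two_ne_zero)]
  linear_combination (-2*(Real.sqrt 2:ℂ)) * Complex.I_sq
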